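/- Let n ≥ 1 and let H be an operator on signals u : [0,∞) → ℝⁿ which is causal, maps L2 into L2, and maps L2e into L2e. Let a, b, c ∈ ℝ and suppose there exists ε > 0 with a ≤ −ε and c ≥ ε. Then the soft scaled graph of H is contained in S(a,b,c) (i.e. for every u ∈ L2 with u ≠ 0 and y = Hu, the gain-phase points ρ(u,y)·e^{±iθ(u,y)} lie in S(a,b,c)) if and only if the hard scaled graph of H is contained in S(a,b,c) (i.e. for every u ∈ L2e, every T > 0 with P_T u ≠ 0, and y = Hu, the gain-phase points ρ(P_T u, P_T y)·e^{±iθ(P_T u, P_T y)} lie in S(a,b,c)). -/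

import Mathlib

open MeasureTheory

noncomputable section

/-- A signal is a function `ℝ → ℝⁿ`; only its values on `[0,∞)` matter. -/
abbrev Signal (n : ℕ) := ℝ → EuclideanSpace ℝ (Fin n)

/-- Truncation `P_T u`: pointwise product of `u` with the indicator of `[0,T]`. -/
def trunc {n : ℕ} (T : ℝ) (u : Signal n) : Signal n :=
  (Set.Icc (0 : ℝ) T).indicator u

/-- `u ∈ L2`: a.e.-strongly measurable on `[0,∞)` with `∫₀^∞ ‖u(t)‖² dt < ∞`. -/
def InL2 {n : ℕ} (u : Signal n) : Prop :=
  AEStronglyMeasurable u (volume.restrict (Set.Ici (0 : ℝ))) ∧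
    Integrable (fun t => ‖u t‖ ^ 2) (volume.restrict (Set.Ici (0 : ℝ)))

/-- `u ∈ L2e`: every truncation of `u` lies in `L2`. -/
def InL2e {n : ℕ} (u : Signal n) : Prop :=
  ∀ T ≥ (0 : ℝ), InL2 (trunc T u)

/-- `H` is causal: `P_T (H u) = P_T (H (P_T u))` a.e., for all `T ≥ 0` and `u ∈ L2e`. -/
def Causal {n : ℕ} (H : Signal n → Signal n) : Prop :=
  ∀ T ≥ (0 : ℝ), ∀ u : Signal n, InL2e u →
    trunc T (H u) =ᵐ[volume] trunc T (H (trunc T u))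

/-- The `L2` norm of a signal, `‖u‖ = √(∫₀^∞ ‖u(t)‖² dt)`. -/
def L2norm {n : ℕ} (u : Signal n) : ℝ :=
  Real.sqrt (∫ t in Set.Ici (0 : ℝ), ‖u t‖ ^ 2)

/-- The `L2` inner product of two signals, `⟨u,y⟩ = ∫₀^∞ ⟨u(t),y(t)⟩ dt`. -/
def L2inner {n : ℕ} (u y : Signal n) : ℝ :=
  ∫ t in Set.Ici (0 : ℝ), (inner ℝ (u t) (y t) : ℝ)

/-- The gain `ρ(u,y) = ‖y‖/‖u‖`. -/
def gain {n : ℕ} (u y : Signal n) : ℝ := L2norm y / L2norm u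

/-- The phase `θ(u,y) = arccos(⟨u,y⟩/(‖u‖‖y‖))`, with `θ(u,y) = 0` when `y = 0`. -/
def phase {n : ℕ} (u y : Signal n) : ℝ :=
  if L2norm y = 0 then 0 else Real.arccos (L2inner u y / (L2norm u * L2norm y))

/-- The two gain-phase points `ρ(u,y)·e^{±iθ(u,y)}` contributed by the pair `(u,y)`. -/
def sgPoints {n : ℕ} (u y : Signal n) : Set ℂ :=
  {(gain u y : ℂ) * Complex.exp ((phase u y : ℂ) * Complex.I),
   (gain u y : ℂ) * Complex.exp (-((phase u y : ℂ) * Complex.I))}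

/-- The multiplier region `S(a,b,c) = {z ∈ ℂ : a|z|² + 2b·Re z + c ≥ 0}`. -/
def multiplierRegion (a b c : ℝ) : Set ℂ :=
  {z : ℂ | 0 ≤ a * ‖z‖ ^ 2 + 2 * b * z.re + c}

section Aux

open Filter Topology

variable {n : ℕ}

lemma normSq_nonneg (u : Signal n) : 0 ≤ ∫ t in Set.Ici (0:ℝ), ‖u t‖ ^ 2 :=
  integral_nonneg fun _ => sq_nonneg _

lemma L2norm_sq (u : Signal n) : L2norm u ^ 2 = ∫ t in Set.Ici (0:ℝ), ‖u t‖ ^ 2 :=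
  Real.sq_sqrt (normSq_nonneg u)

lemma L2norm_nonneg (u : Signal n) : 0 ≤ L2norm u := Real.sqrt_nonneg _

lemma L2norm_pos {u : Signal n} (hu : L2norm u ≠ 0) : 0 < L2norm u :=
  lt_of_le_of_ne (L2norm_nonneg u) (Ne.symm hu)

lemma normSq_pos {u : Signal n} (hu : L2norm u ≠ 0) :
    0 < ∫ t in Set.Ici (0:ℝ), ‖u t‖ ^ 2 := by
  have := L2norm_pos hu
  rw [← L2norm_sq]; positivity

lemma norm_trunc_sq (T : ℝ) (u : Signal n) (t : ℝ) :
    ‖trunc T u t‖ ^ 2 = (Set.Icc (0:ℝ) T).indicator (fun s => ‖u s‖ ^ 2) t := by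
  by_cases ht : t ∈ Set.Icc (0:ℝ) T <;>
    simp [trunc, Set.indicator_of_mem, Set.indicator_of_notMem, ht]

lemma inL2_trunc {u : Signal n} (hu : InL2 u) (T : ℝ) : InL2 (trunc T u) := by
  refine ⟨hu.1.indicator measurableSet_Icc, ?_⟩
  have h : (fun t => ‖trunc T u t‖ ^ 2)
      = (Set.Icc (0:ℝ) T).indicator (fun s => ‖u s‖ ^ 2) := funext (norm_trunc_sq T u)
  rw [h]
  exact hu.2.indicator measurableSet_Icc

lemma inL2e_of_inL2 {u : Signal n} (hu : InL2 u) : InL2e u := fun T _ => inL2_trunc hu T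

lemma integrable_inner {u y : Signal n} (hu : InL2 u) (hy : InL2 y) :
    Integrable (fun t => (inner ℝ (u t) (y t) : ℝ)) (volume.restrict (Set.Ici (0:ℝ))) := by
  refine Integrable.mono' (hu.2.add hy.2) (hu.1.inner hy.1)
    (Filter.Eventually.of_forall fun t => ?_)
  simp only [Pi.add_apply]
  have h1 : ‖(inner ℝ (u t) (y t) : ℝ)‖ ≤ ‖u t‖ * ‖y t‖ := norm_inner_le_norm _ _
  nlinarith [sq_nonneg (‖u t‖ - ‖y t‖), norm_nonneg (u t), norm_nonneg (y t)]

lemma abs_L2inner_le {u y : Signal n} (hu : InL2 u) (hy : InL2 y) :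
    |L2inner u y| ≤ L2norm u * L2norm y := by
  set A := ∫ t in Set.Ici (0:ℝ), ‖y t‖ ^ 2 with hA
  set C := ∫ t in Set.Ici (0:ℝ), ‖u t‖ ^ 2 with hC
  set I := L2inner u y with hI
  have key : ∀ x : ℝ, 0 ≤ A * (x * x) + (2 * I) * x + C := by
    intro x
    have expand : (fun t => ‖u t + x • y t‖ ^ 2)
        = fun t => ‖u t‖ ^ 2 + ((2 * x) * (inner ℝ (u t) (y t) : ℝ)
            + (x * x) * ‖y t‖ ^ 2) := by
      funext t
      have h := norm_add_sq_real (u t) (x • y t)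
      rw [h, real_inner_smul_right, norm_smul]
      simp only [Real.norm_eq_abs, mul_pow, sq_abs]
      ring
    have h1 : Integrable (fun t => (2 * x) * (inner ℝ (u t) (y t) : ℝ))
        (volume.restrict (Set.Ici (0:ℝ))) := (integrable_inner hu hy).const_mul _
    have h2 : Integrable (fun t => (x * x) * ‖y t‖ ^ 2)
        (volume.restrict (Set.Ici (0:ℝ))) := hy.2.const_mul _
    have h12 : Integrable (fun t => (2 * x) * (inner ℝ (u t) (y t) : ℝ)
        + (x * x) * ‖y t‖ ^ 2) (volume.restrict (Set.Ici (0:ℝ))) := h1.add h2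
    have h0 : 0 ≤ ∫ t in Set.Ici (0:ℝ), ‖u t + x • y t‖ ^ 2 :=
      integral_nonneg fun _ => sq_nonneg _
    rw [expand, integral_add hu.2 h12, integral_add h1 h2,
      integral_const_mul, integral_const_mul] at h0
    rw [hA, hC, hI, L2inner]
    linarith
  have hd := discrim_le_zero key
  rw [discrim] at hd
  have h4 : I ^ 2 ≤ C * A := by nlinarith
  calc |I| = Real.sqrt (I ^ 2) := (Real.sqrt_sq_eq_abs I).symm
    _ ≤ Real.sqrt (C * A) := Real.sqrt_le_sqrt h4
    _ = L2norm u * L2norm y := by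
        rw [Real.sqrt_mul (by rw [hC]; exact normSq_nonneg u), L2norm, L2norm, ← hA, ← hC]

lemma sg_subset_iff {a b c : ℝ} {u y : Signal n} (hu : InL2 u) (hy : InL2 y)
    (hun : L2norm u ≠ 0) :
    sgPoints u y ⊆ multiplierRegion a b c ↔
      0 ≤ a * L2norm y ^ 2 + 2 * b * L2inner u y + c * L2norm u ^ 2 := by
  have hupos : 0 < L2norm u := L2norm_pos hun
  have hρ : 0 ≤ gain u y := div_nonneg (L2norm_nonneg y) (L2norm_nonneg u)
  have habs : ∀ θ : ℝ,
      ‖(gain u y : ℂ) * Complex.exp ((θ : ℂ) * Complex.I)‖ = gain u y := by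
    intro θ
    rw [norm_mul, Complex.norm_real, Complex.norm_exp]
    simp [Complex.mul_re, abs_of_nonneg hρ]
  have hre : ∀ θ : ℝ,
      (((gain u y : ℂ)) * Complex.exp ((θ : ℂ) * Complex.I)).re
        = gain u y * Real.cos θ := by
    intro θ
    rw [Complex.re_ofReal_mul, Complex.exp_ofReal_mul_I_re]
  have e1 : -(((phase u y : ℝ) : ℂ) * Complex.I)
      = ((-(phase u y) : ℝ) : ℂ) * Complex.I := by push_cast; ring
  have habs2 : ‖(gain u y : ℂ)
      * Complex.exp (-((phase u y : ℂ) * Complex.I))‖ = gain u y := by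
    rw [e1]; exact habs _
  have hre2 : (((gain u y : ℂ)) * Complex.exp (-((phase u y : ℂ) * Complex.I))).re
      = gain u y * Real.cos (phase u y) := by
    rw [e1, hre, Real.cos_neg]
  have key2 : ∀ z : ℂ, ‖z‖ = gain u y
      → z.re = gain u y * Real.cos (phase u y) →
      ((z ∈ multiplierRegion a b c)
        ↔ 0 ≤ a * gain u y ^ 2 + 2 * b * (gain u y * Real.cos (phase u y)) + c) := by
    intro z h1 h2
    rw [multiplierRegion, Set.mem_setOf_eq, h1, h2]
  have hmem : sgPoints u y ⊆ multiplierRegion a b c ↔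
      0 ≤ a * gain u y ^ 2 + 2 * b * (gain u y * Real.cos (phase u y)) + c := by
    rw [sgPoints, Set.insert_subset_iff, Set.singleton_subset_iff,
      key2 _ (habs _) (hre _), key2 _ habs2 hre2, and_self]
  rw [hmem]
  by_cases hy0 : L2norm y = 0
  · have hle := abs_L2inner_le hu hy
    rw [hy0, mul_zero] at hle
    have hIz : L2inner u y = 0 := abs_eq_zero.mp (le_antisymm hle (abs_nonneg _))
    rw [phase, if_pos hy0, gain, hy0, hIz]
    have hp : 0 < L2norm u ^ 2 := by positivity
    simp only [zero_div, Real.cos_zero, mul_zero, zero_mul, mul_one, add_zero, zero_add,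
      ne_eq, zero_pow, OfNat.ofNat_ne_zero, not_false_eq_true, zero_add, mul_zero]
    constructor
    · intro h; nlinarith
    · intro h; nlinarith
  · have hypos : 0 < L2norm y := L2norm_pos hy0
    have hr := abs_L2inner_le hu hy
    have hr1 : |L2inner u y / (L2norm u * L2norm y)| ≤ 1 := by
      rw [abs_div, abs_of_pos (mul_pos hupos hypos)]
      exact (div_le_one (mul_pos hupos hypos)).mpr hr
    obtain ⟨hrl, hru⟩ := abs_le.mp hr1
    rw [phase, if_neg hy0, Real.cos_arccos hrl hru, gain]
    have hq : a * (L2norm y / L2norm u) ^ 2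
        + 2 * b * ((L2norm y / L2norm u) * (L2inner u y / (L2norm u * L2norm y))) + c
        = (a * L2norm y ^ 2 + 2 * b * L2inner u y + c * L2norm u ^ 2) / L2norm u ^ 2 := by
      field_simp
    rw [hq, le_div_iff₀ (by positivity), zero_mul]

lemma normSq_trunc (T : ℝ) (u : Signal n) :
    ∫ t in Set.Ici (0:ℝ), ‖trunc T u t‖ ^ 2 = ∫ t in Set.Icc (0:ℝ) T, ‖u t‖ ^ 2 := by
  rw [show (fun t => ‖trunc T u t‖ ^ 2)
      = (Set.Icc (0:ℝ) T).indicator (fun s => ‖u s‖ ^ 2) from funext (norm_trunc_sq T u),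
    setIntegral_indicator measurableSet_Icc,
    Set.inter_eq_self_of_subset_right Set.Icc_subset_Ici_self]

lemma inner_trunc_eq (T : ℝ) (u y : Signal n) (t : ℝ) :
    (inner ℝ (trunc T u t) (trunc T y t) : ℝ)
      = (Set.Icc (0:ℝ) T).indicator (fun s => (inner ℝ (u s) (y s) : ℝ)) t := by
  by_cases ht : t ∈ Set.Icc (0:ℝ) T <;>
    simp [trunc, Set.indicator_of_mem, Set.indicator_of_notMem, ht]

lemma L2inner_trunc (T : ℝ) (u y : Signal n) :
    L2inner (trunc T u) (trunc T y) = ∫ t in Set.Icc (0:ℝ) T, (inner ℝ (u t) (y t) : ℝ) := by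
  rw [L2inner, show (fun t => (inner ℝ (trunc T u t) (trunc T y t) : ℝ))
      = (Set.Icc (0:ℝ) T).indicator (fun s => (inner ℝ (u s) (y s) : ℝ))
      from funext (inner_trunc_eq T u y),
    setIntegral_indicator measurableSet_Icc,
    Set.inter_eq_self_of_subset_right Set.Icc_subset_Ici_self]

lemma L2inner_trunc_right (T : ℝ) (u y : Signal n) :
    L2inner (trunc T u) (trunc T y) = L2inner (trunc T u) y := by
  unfold L2inner
  refine integral_congr_ae (Filter.Eventually.of_forall fun t => ?_)
  by_cases ht : t ∈ Set.Icc (0:ℝ) T <;>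
    simp [trunc, Set.indicator_of_mem, Set.indicator_of_notMem, ht]

lemma normSq_congr {w z : Signal n} (h : w =ᵐ[volume] z) :
    (∫ t in Set.Ici (0:ℝ), ‖w t‖ ^ 2) = ∫ t in Set.Ici (0:ℝ), ‖z t‖ ^ 2 :=
  integral_congr_ae ((ae_restrict_of_ae h).mono fun _ ht => by simp only [ht])

lemma L2inner_congr_right (v : Signal n) {w z : Signal n} (h : w =ᵐ[volume] z) :
    L2inner v w = L2inner v z :=
  integral_congr_ae ((ae_restrict_of_ae h).mono fun _ ht => by simp only [ht])

lemma normSq_trunc_le (T : ℝ) {y : Signal n} (hy : InL2 y) :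
    (∫ t in Set.Ici (0:ℝ), ‖trunc T y t‖ ^ 2) ≤ ∫ t in Set.Ici (0:ℝ), ‖y t‖ ^ 2 := by
  refine integral_mono (inL2_trunc hy T).2 hy.2 fun t => ?_
  by_cases ht : t ∈ Set.Icc (0:ℝ) T <;>
    simp [trunc, Set.indicator_of_mem, Set.indicator_of_notMem, ht, sq_nonneg]

lemma tendsto_setIntegral_Icc (f : ℝ → ℝ)
    (hf : Integrable f (volume.restrict (Set.Ici (0:ℝ)))) :
    Filter.Tendsto (fun k : ℕ => ∫ t in Set.Icc (0:ℝ) (k:ℝ), f t) Filter.atTop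
      (nhds (∫ t in Set.Ici (0:ℝ), f t)) := by
  have hU : ⋃ k : ℕ, Set.Icc (0:ℝ) (k:ℝ) = Set.Ici 0 := by
    ext x
    simp only [Set.mem_iUnion, Set.mem_Icc, Set.mem_Ici]
    constructor
    · rintro ⟨k, h0, -⟩; exact h0
    · intro hx; obtain ⟨k, hk⟩ := exists_nat_ge x; exact ⟨k, hx, hk⟩
  have h := tendsto_setIntegral_of_monotone (μ := volume) (f := f)
    (s := fun k : ℕ => Set.Icc (0:ℝ) (k:ℝ)) (fun _ => measurableSet_Icc)
    (fun i j hij => Set.Icc_subset_Icc le_rfl (by exact_mod_cast hij)) (hU ▸ hf)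
  rwa [hU] at h

end Aux

/-- Soft–hard scaled graph containment equivalence: for a causal, `L2`-stable `H` and a
positive-negative multiplier `[[a,b],[b,c]]`, the soft SG of `H` lies in `S(a,b,c)` iff
the hard SG of `H` lies in `S(a,b,c)`. -/
theorem stmt1 {n : ℕ} (hn : 1 ≤ n) (H : Signal n → Signal n)
    (hcausal : Causal H)
    (hL2 : ∀ u, InL2 u → InL2 (H u))
    (hL2e : ∀ u, InL2e u → InL2e (H u))
    (a b c : ℝ) (hpn : ∃ ε > (0 : ℝ), a ≤ -ε ∧ ε ≤ c) :
    (∀ u : Signal n, InL2 u → L2norm u ≠ 0 →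
        sgPoints u (H u) ⊆ multiplierRegion a b c) ↔
    (∀ u : Signal n, InL2e u → ∀ T > (0 : ℝ), L2norm (trunc T u) ≠ 0 →
        sgPoints (trunc T u) (trunc T (H u)) ⊆ multiplierRegion a b c) := by
  obtain ⟨ε, hε, haε, hcε⟩ := hpn
  have ha0 : a ≤ 0 := le_trans haε (by linarith)
  constructor
  · -- soft → hard
    intro hsoft u hu T hT hTu
    have hvL2 : InL2 (trunc T u) := hu T hT.le
    have hHv : InL2 (H (trunc T u)) := hL2 _ hvL2
    have hHuT : InL2 (trunc T (H u)) := hL2e u hu T hT.le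
    rw [sg_subset_iff hvL2 hHuT hTu]
    have hsoft' := (sg_subset_iff hvL2 hHv hTu).mp (hsoft _ hvL2 hTu)
    have hae := hcausal T hT.le u hu
    have h1 : (∫ t in Set.Ici (0:ℝ), ‖trunc T (H u) t‖ ^ 2)
        = ∫ t in Set.Ici (0:ℝ), ‖trunc T (H (trunc T u)) t‖ ^ 2 := normSq_congr hae
    have h2 : L2inner (trunc T u) (trunc T (H u))
        = L2inner (trunc T u) (H (trunc T u)) := by
      rw [L2inner_congr_right (trunc T u) hae, L2inner_trunc_right]
    have h3 : (∫ t in Set.Ici (0:ℝ), ‖trunc T (H (trunc T u)) t‖ ^ 2)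
        ≤ ∫ t in Set.Ici (0:ℝ), ‖H (trunc T u) t‖ ^ 2 := normSq_trunc_le T hHv
    rw [L2norm_sq, L2norm_sq] at hsoft' ⊢
    rw [h1, h2]
    nlinarith [mul_le_mul_of_nonpos_left h3 ha0]
  · -- hard → soft
    intro hhard u hu hun
    have huL2e : InL2e u := inL2e_of_inL2 hu
    have hHu : InL2 (H u) := hL2 u hu
    rw [sg_subset_iff hu hHu hun, L2norm_sq, L2norm_sq]
    have hNpos : 0 < ∫ t in Set.Ici (0:ℝ), ‖u t‖ ^ 2 := normSq_pos hun
    have t1 := tendsto_setIntegral_Icc (fun t => ‖H u t‖ ^ 2) hHu.2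
    have t2 := tendsto_setIntegral_Icc (fun t => (inner ℝ (u t) (H u t) : ℝ))
      (integrable_inner hu hHu)
    have t3 := tendsto_setIntegral_Icc (fun t => ‖u t‖ ^ 2) hu.2
    have tall := ((t1.const_mul a).add (t2.const_mul (2 * b))).add (t3.const_mul c)
    refine ge_of_tendsto tall ?_
    have hev : ∀ᶠ k : ℕ in Filter.atTop,
        0 < ∫ t in Set.Icc (0:ℝ) (k:ℝ), ‖u t‖ ^ 2 :=
      t3.eventually (eventually_gt_nhds hNpos)
    filter_upwards [hev, Filter.eventually_ge_atTop 1] with k hk hk1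
    have hkpos : (0:ℝ) < (k:ℝ) := by exact_mod_cast Nat.lt_of_lt_of_le Nat.zero_lt_one hk1
    have htu : L2norm (trunc (k:ℝ) u) ≠ 0 := by
      rw [L2norm, normSq_trunc]
      exact (Real.sqrt_pos.mpr hk).ne'
    have hq := (sg_subset_iff (inL2_trunc hu _) (inL2_trunc hHu _) htu).mp
      (hhard u huL2e (k:ℝ) hkpos htu)
    rw [L2norm_sq, L2norm_sq, normSq_trunc, normSq_trunc, L2inner_trunc] at hq
    exact hq


end
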